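/- Fix γ ∈ (0,1) and α ∈ (γ,1). Set δ = α/γ − 1, β = δ²γ/(2+δ), and θ = e^β/(e^β − 1)². Then for every T ∈ ℕ and every function N : {0,1}^T → {1,…,T}, if ξ = (ξ₁,…,ξ_T) are i.i.d. Bernoulli(γ) random variables, then E[S(ξ, N(ξ))] ≤ θ + α·E[N(ξ)]. -/

import Mathlib

namespace Caching

attribute [local instance low] Classical.propDecidable

/-- A run of a feasible eviction strategy on the request sequence `σ` with cache size `k`
and time horizon `T`.  `C t` is the cache after processing request `t` (with `C 0 = ∅`),
and `p t` is the page evicted at time `t` (meaningful at full-cache misses). -/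
structure CacheRun (S : Type) [DecidableEq S] (k T : ℕ) (σ : ℕ → S) where
  C : ℕ → Finset S
  p : ℕ → S
  init : C 0 = ∅
  card_le : ∀ t, (C t).card ≤ k
  hit : ∀ t, 1 ≤ t → t ≤ T → (σ t ∈ C (t - 1) ∨ (C (t - 1)).card < k) →
      C t = insert (σ t) (C (t - 1))
  evict_mem : ∀ t, 1 ≤ t → t ≤ T → σ t ∉ C (t - 1) → (C (t - 1)).card = k →
      p t ∈ C (t - 1)
  evict : ∀ t, 1 ≤ t → t ≤ T → σ t ∉ C (t - 1) → (C (t - 1)).card = k →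
      C t = insert (σ t) ((C (t - 1)).erase (p t))

variable {S : Type} [DecidableEq S]

/- `nextReq σ T t` is `ν(t)`: the first time `s > t` (with `s ≤ T`) at which the page
`σ t` is requested again, and `T + 1` if there is no such time. -/
open Classical in
noncomputable def nextReq (σ : ℕ → S) (T t : ℕ) : ℕ :=
  if h : ∃ s, t < s ∧ s ≤ T ∧ σ s = σ t then Nat.find h else T + 1

/-- The total prediction loss `η = Σ_{t=1}^T |ν(t) - ω(t)|`. -/
noncomputable def totalLoss (σ : ℕ → S) (T : ℕ) (ω : ℕ → ℕ) : ℕ :=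
  ∑ t ∈ Finset.Icc 1 T, Nat.dist (nextReq σ T t) (ω t)

/-- `I_Q(t)`: indices of the last requests (up to time `t`) of the currently cached pages. -/
noncomputable def lastIdx {k T : ℕ} {σ : ℕ → S} (R : CacheRun S k T σ) (t : ℕ) : Finset ℕ :=
  (Finset.Icc 1 t).filter fun i => σ i ∈ R.C t ∧ ∀ j ∈ Finset.Icc (i + 1) t, σ j ≠ σ i

/-- Time `t` is a full-cache miss (an eviction step). -/
def EvictStep {k T : ℕ} {σ : ℕ → S} (R : CacheRun S k T σ) (t : ℕ) : Prop :=
  1 ≤ t ∧ t ≤ T ∧ σ t ∉ R.C (t - 1) ∧ (R.C (t - 1)).card = k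

/-- At time `t` the run evicts the page whose last-request index is `i`. -/
def EvictsIdx {k T : ℕ} {σ : ℕ → S} (R : CacheRun S k T σ) (t i : ℕ) : Prop :=
  EvictStep R t ∧ i ∈ lastIdx R (t - 1) ∧ R.p t = σ i

/-- `OBJ_Q`: the number of cache misses of the run. -/
noncomputable def misses {k T : ℕ} {σ : ℕ → S} (R : CacheRun S k T σ) : ℕ :=
  ((Finset.Icc 1 T).filter fun t => σ t ∉ R.C (t - 1)).card

/-- Belady's algorithm: on a full-cache miss always evict the cached page with the
largest next-request time. -/
def IsBelady {k T : ℕ} {σ : ℕ → S} (A : CacheRun S k T σ) : Prop :=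
  ∀ t, EvictStep A t → ∀ i ∈ lastIdx A (t - 1), A.p t = σ i →
    ∀ j ∈ lastIdx A (t - 1), nextReq σ T j ≤ nextReq σ T i

/-- BlindOracle: on a full-cache miss always evict the cached page with the largest
predicted next-request time. -/
def IsBlindOracle {k T : ℕ} {σ : ℕ → S} (B : CacheRun S k T σ) (ω : ℕ → ℕ) : Prop :=
  ∀ t, EvictStep B t → ∀ i ∈ lastIdx B (t - 1), B.p t = σ i →
    ∀ j ∈ lastIdx B (t - 1), ω j ≤ ω i

/-- An eviction graph of a run: a directed graph on `{1,…,T}` whose every edge `(i, j)`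
corresponds to a distinct time (`time e`) at which the run made a mistake by evicting
page `σ j` while `i` was a strictly better eviction candidate in the cache. -/
structure EvictionGraph {k T : ℕ} {σ : ℕ → S} (R : CacheRun S k T σ) where
  E : Finset (ℕ × ℕ)
  time : ℕ × ℕ → ℕ
  time_inj : ∀ e ∈ E, ∀ e' ∈ E, time e = time e' → e = e'
  mistake : ∀ e ∈ E, EvictsIdx R (time e) e.2 ∧ e.1 ∈ lastIdx R (time e - 1) ∧
      nextReq σ T e.2 < nextReq σ T e.1

/-- The eviction at time `t` triggers the eviction at time `t'`: the page evicted
at `t` is next requested at `t' = ν(i)`, which is again an eviction step. -/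
def Triggers {k T : ℕ} {σ : ℕ → S} (R : CacheRun S k T σ) (t t' : ℕ) : Prop :=
  ∃ i, EvictsIdx R t i ∧ t' = nextReq σ T i ∧ ∃ j, EvictsIdx R t' j

/-- The eviction of the page with last-request index `i` triggers the eviction of the
page with last-request index `j` (at time `ν(i)`). -/
def TriggersIdx {k T : ℕ} {σ : ℕ → S} (R : CacheRun S k T σ) (i j : ℕ) : Prop :=
  (∃ t, EvictsIdx R t i) ∧ EvictsIdx R (nextReq σ T i) j

/-- The page requested at time `t` was never requested before. -/
def NewPage (σ : ℕ → S) (t : ℕ) : Prop := ∀ s, 1 ≤ s → s < t → σ s ≠ σ t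

/-- At time `t` the evicted page has the largest prediction among cached pages. -/
def BlindChoiceAt {k T : ℕ} {σ : ℕ → S} (R : CacheRun S k T σ) (ω : ℕ → ℕ) (t : ℕ) : Prop :=
  ∀ i ∈ lastIdx R (t - 1), R.p t = σ i → ∀ j ∈ lastIdx R (t - 1), ω j ≤ ω i

/-- Corrector's choice at time `t`: if some cached page has a provably wrong prediction
(`ω i < t`), evict such a page with minimal prediction; otherwise act as BlindOracle. -/
def CorrectorChoiceAt {k T : ℕ} {σ : ℕ → S} (R : CacheRun S k T σ) (ω : ℕ → ℕ) (t : ℕ) :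
    Prop :=
  ((∃ i ∈ lastIdx R (t - 1), ω i < t) →
    ∀ i ∈ lastIdx R (t - 1), R.p t = σ i →
      ω i < t ∧ ∀ j ∈ lastIdx R (t - 1), ω j < t → ω i ≤ ω j) ∧
  ((¬ ∃ i ∈ lastIdx R (t - 1), ω i < t) → BlindChoiceAt R ω t)

/-- The page requested at time `t` was last evicted (before `t`) at a step labeled with
strategy `s₀` (0 = BlindOracle, 1 = RandomAlg, 2 = Corrector). -/
def LastEvictedWith {k T : ℕ} {σ : ℕ → S} (R : CacheRun S k T σ) (strat : ℕ → Fin 3)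
    (t : ℕ) (s₀ : Fin 3) : Prop :=
  ∃ t₀, t₀ < t ∧ EvictStep R t₀ ∧ R.p t₀ = σ t ∧ strat t₀ = s₀ ∧
    ∀ t₁, t₀ < t₁ → t₁ < t → ¬(EvictStep R t₁ ∧ R.p t₁ = σ t)

/-- A run of the AlternatingOracle strategy (for a fixed realization of its random
choices), together with the labeling `strat` of which of the three strategies was used
at each eviction step: on a miss for a never-requested page use BlindOracle; if the
requested page was last evicted by BlindOracle use RandomAlg (an arbitrary cached page);
if by RandomAlg use Corrector; if by Corrector use BlindOracle. -/
def IsAlternatingOracle {k T : ℕ} {σ : ℕ → S} (R : CacheRun S k T σ) (ω : ℕ → ℕ)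
    (strat : ℕ → Fin 3) : Prop :=
  ∀ t, EvictStep R t →
    (NewPage σ t → strat t = 0 ∧ BlindChoiceAt R ω t) ∧
    (LastEvictedWith R strat t 0 → strat t = 1) ∧
    (LastEvictedWith R strat t 1 → strat t = 2 ∧ CorrectorChoiceAt R ω t) ∧
    (LastEvictedWith R strat t 2 → strat t = 0 ∧ BlindChoiceAt R ω t)

/-- AlternatingOracle driven by a seed `u` of uniform random values: at each eviction
step performed by RandomAlg at time `t`, the evicted page is the one whose last-request
index has rank `u t` among the `k` cached indices, so that for a uniformly random seed
the evicted page is uniform over the cache. -/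
def IsAlternatingOracleSeeded {k T : ℕ} {σ : ℕ → S} (R : CacheRun S k T σ) (ω : ℕ → ℕ)
    (strat : ℕ → Fin 3) (u : Fin (T + 1) → Fin k) : Prop :=
  IsAlternatingOracle R ω strat ∧
  ∀ t (h : EvictStep R t), strat t = 1 →
    ∀ i ∈ lastIdx R (t - 1), R.p t = σ i →
      ((lastIdx R (t - 1)).filter fun j => j < i).card =
        ((u ⟨t, Nat.lt_succ_of_le h.2.1⟩ : Fin k) : ℕ)

/-- The family of runs is adapted to the seeds: the behavior up to time `t` depends only
on the seed values with index at most `t` (the strategy is online). -/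
def Adapted {k T : ℕ} {σ : ℕ → S} (R : (Fin (T + 1) → Fin k) → CacheRun S k T σ)
    (strat : (Fin (T + 1) → Fin k) → ℕ → Fin 3) : Prop :=
  ∀ u u' t, (∀ s : Fin (T + 1), (s : ℕ) ≤ t → u s = u' s) →
    (R u).C t = (R u').C t ∧ (R u).p t = (R u').p t ∧ strat u t = strat u' t

/-- The probability of the outcome `x` for `T` i.i.d. Bernoulli(γ) random bits. -/
noncomputable def bernWeight (γ : ℝ) {T : ℕ} (x : Fin T → Bool) : ℝ :=
  ∏ i, if x i then γ else 1 - γ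

/-- `S(x, m)`: the number of ones among the first `m` coordinates of `x`. -/
noncomputable def scount {T : ℕ} (x : Fin T → Bool) (m : ℕ) : ℕ :=
  (Finset.univ.filter fun i : Fin T => (i : ℕ) < m ∧ x i).card

private lemma aux_log_ge (x : ℝ) (hx : 0 ≤ x) : 2 * x / (2 + x) ≤ Real.log (1 + x) := by
  set f : ℝ → ℝ := fun t => Real.log (1 + t) - 2 * t / (2 + t) with hf
  have key : ∀ y : ℝ, 0 ≤ y →
      HasDerivAt f (1 / (1 + y) - (2 * (2 + y) - 2 * y * 1) / (2 + y) ^ 2) y := by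
    intro y hy
    have h1 : HasDerivAt (fun t : ℝ => 1 + t) 1 y := (hasDerivAt_id y).const_add 1
    have h2 : HasDerivAt (fun t : ℝ => Real.log (1 + t)) (1 / (1 + y)) y := by
      simpa using h1.log (by linarith)
    have h3 : HasDerivAt (fun t : ℝ => 2 * t) 2 y := by
      simpa using (hasDerivAt_id y).const_mul (2 : ℝ)
    have h4 : HasDerivAt (fun t : ℝ => 2 + t) 1 y := (hasDerivAt_id y).const_add 2
    exact h2.sub (h3.div h4 (by linarith))
  have mono : MonotoneOn f (Set.Ici (0 : ℝ)) := by
    apply monotoneOn_of_deriv_nonneg (convex_Ici 0)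
    · intro y hy
      exact ((key y hy).continuousAt).continuousWithinAt
    · intro y hy
      rw [interior_Ici] at hy
      have hy0 : 0 < y := hy
      exact ((key y hy0.le).differentiableAt).differentiableWithinAt
    · intro y hy
      rw [interior_Ici] at hy
      have hy0 : 0 < y := hy
      rw [(key y hy0.le).deriv]
      have hy2 : (0 : ℝ) < 2 + y := by linarith
      have hy1 : (0 : ℝ) < 1 + y := by linarith
      rw [sub_nonneg, div_le_div_iff₀ (by positivity) hy1]
      nlinarith [sq_nonneg y]
  have h0 : f 0 ≤ f x := mono Set.self_mem_Ici hx hx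
  have hf0 : f 0 = 0 := by simp [hf]
  rw [hf0] at h0
  have hfx : f x = Real.log (1 + x) - 2 * x / (2 + x) := rfl
  rw [hfx] at h0
  linarith

private lemma card_filter_lt (T m : ℕ) (h : m ≤ T) :
    (Finset.univ.filter fun i : Fin T => (i : ℕ) < m).card = m := by
  have heq : (Finset.univ.filter fun i : Fin T => (i : ℕ) < m)
      = (Finset.range m).attachFin
          (fun x hx => lt_of_lt_of_le (Finset.mem_range.mp hx) h) := by
    ext i
    simp [Finset.mem_attachFin]
  rw [heq, Finset.card_attachFin, Finset.card_range]

private lemma bernWeight_nonneg {γ : ℝ} (h0 : 0 ≤ γ) (h1 : γ ≤ 1) {T : ℕ}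
    (x : Fin T → Bool) : 0 ≤ bernWeight γ x := by
  rw [bernWeight]
  exact Finset.prod_nonneg fun i _ => by by_cases h : x i <;> simp [h] <;> linarith

private lemma mgf_eq (γ δ : ℝ) (T m : ℕ) (hm : m ≤ T) :
    ∑ x : Fin T → Bool, bernWeight γ x * (1 + δ) ^ scount x m = (1 + γ * δ) ^ m := by
  classical
  have h1 : ∀ x : Fin T → Bool, bernWeight γ x * (1 + δ) ^ scount x m
      = ∏ i : Fin T,
          ((if x i then γ else 1 - γ) * (if (i : ℕ) < m ∧ x i then 1 + δ else 1)) := by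
    intro x
    rw [bernWeight, scount, ← Finset.prod_const, Finset.prod_filter,
      ← Finset.prod_mul_distrib]
  simp only [h1]
  rw [← Fintype.piFinset_univ,
    ← Finset.prod_univ_sum (fun _ : Fin T => (Finset.univ : Finset Bool))
      (fun i b => (if b then γ else 1 - γ) * (if (i : ℕ) < m ∧ b then 1 + δ else 1))]
  have h3 : ∀ i : Fin T,
      (∑ b : Bool, ((if b then γ else 1 - γ) * (if (i : ℕ) < m ∧ b then 1 + δ else 1)))
        = if (i : ℕ) < m then 1 + γ * δ else 1 := by
    intro i
    rw [Fintype.sum_bool]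
    by_cases h : (i : ℕ) < m <;> simp [h] <;> ring
  rw [Finset.prod_congr rfl fun i _ => h3 i, ← Finset.prod_filter,
    Finset.prod_const, card_filter_lt T m hm]

private lemma chernoff_bound (γ δ : ℝ) (hγ0 : 0 ≤ γ) (hγ1 : γ ≤ 1) (hδ0 : 0 < δ)
    (T m : ℕ) (hm : m ≤ T) (s : ℝ) :
    ∑ x : Fin T → Bool, bernWeight γ x * (if s ≤ (scount x m : ℝ) then (1 : ℝ) else 0)
      ≤ Real.exp ((m : ℝ) * Real.log (1 + γ * δ) - s * Real.log (1 + δ)) := by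
  classical
  set L := Real.log (1 + δ) with hLdef
  have hδ1 : (0 : ℝ) < 1 + δ := by linarith
  have hγδ1 : (0 : ℝ) < 1 + γ * δ := by nlinarith
  have hexp : ∀ n : ℕ, ((1 : ℝ) + δ) ^ n = Real.exp ((n : ℝ) * L) := by
    intro n
    rw [Real.exp_nat_mul, Real.exp_log hδ1]
  have hpt : ∀ x : Fin T → Bool, (if s ≤ (scount x m : ℝ) then (1 : ℝ) else 0)
      ≤ (1 + δ) ^ scount x m * Real.exp (-(s * L)) := by
    intro x
    by_cases h : s ≤ (scount x m : ℝ)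
    · rw [if_pos h, hexp, ← Real.exp_add]
      apply Real.one_le_exp
      have hL0 : 0 ≤ L := Real.log_nonneg (by linarith)
      have := mul_le_mul_of_nonneg_right h hL0
      linarith
    · rw [if_neg h]
      positivity
  calc ∑ x : Fin T → Bool, bernWeight γ x * (if s ≤ (scount x m : ℝ) then (1 : ℝ) else 0)
      ≤ ∑ x : Fin T → Bool,
          bernWeight γ x * ((1 + δ) ^ scount x m * Real.exp (-(s * L))) := by
        refine Finset.sum_le_sum fun x _ =>
          mul_le_mul_of_nonneg_left (hpt x) (bernWeight_nonneg hγ0 hγ1 x)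
    _ = (∑ x : Fin T → Bool, bernWeight γ x * (1 + δ) ^ scount x m)
          * Real.exp (-(s * L)) := by
        rw [Finset.sum_mul]
        exact Finset.sum_congr rfl fun x _ => by ring
    _ = Real.exp ((m : ℝ) * Real.log (1 + γ * δ) - s * L) := by
        rw [mgf_eq γ δ T m hm,
          show ((1 : ℝ) + γ * δ) ^ m = Real.exp ((m : ℝ) * Real.log (1 + γ * δ)) by
            rw [Real.exp_nat_mul, Real.exp_log hγδ1],
          ← Real.exp_add]
        congr 1 <;> ring

private lemma geom_le_aux {r : ℝ} (h0 : 0 ≤ r) (h1 : r < 1) (n : ℕ) :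
    ∑ i ∈ Finset.range n, r ^ i ≤ (1 - r)⁻¹ := by
  have hr : (0 : ℝ) < 1 - r := by linarith
  rw [geom_sum_eq (by intro h; rw [h] at h1; exact lt_irrefl 1 h1) n]
  rw [div_le_iff_of_neg (by linarith : r - 1 < 0)]
  have hp : 0 ≤ r ^ n := pow_nonneg h0 n
  have he : (1 - r)⁻¹ * (r - 1) = -1 := by
    field_simp
    ring
  nlinarith [he]

/-- For i.i.d. Bernoulli(γ) bits and any `N` with `1 ≤ N(ξ) ≤ T`,
`E[S(ξ, N(ξ))] ≤ θ + α·E[N(ξ)]`, where `δ = α/γ − 1`, `β = δ²γ/(2+δ)`, and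
`θ = e^β/(e^β − 1)²`. -/
theorem stmt13 (γ α δ β θ : ℝ) (hγ0 : 0 < γ) (hγ1 : γ < 1) (hα0 : γ < α) (hα1 : α < 1)
    (hδ : δ = α / γ - 1) (hβ : β = δ ^ 2 * γ / (2 + δ))
    (hθ : θ = Real.exp β / (Real.exp β - 1) ^ 2)
    (T : ℕ) (N : (Fin T → Bool) → ℕ) (hN : ∀ x, 1 ≤ N x ∧ N x ≤ T) :
    ∑ x : Fin T → Bool, bernWeight γ x * scount x (N x) ≤
      θ + α * ∑ x : Fin T → Bool, bernWeight γ x * N x := by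
  classical
  have hδ0 : 0 < δ := by
    rw [hδ]
    have : 1 < α / γ := (one_lt_div hγ0).mpr hα0
    linarith
  have hγδ : γ * δ = α - γ := by
    rw [hδ]
    field_simp
  have hα : α = γ * (1 + δ) := by
    rw [mul_add, mul_one, hγδ]; ring
  have hβ0 : 0 < β := by rw [hβ]; positivity
  set L := Real.log (1 + δ) with hLdef
  have hL2 : 2 * δ / (2 + δ) ≤ L := aux_log_ge δ hδ0.le
  have h2δ : (0 : ℝ) < 2 + δ := by linarith
  have hγδ1 : γ * δ < 1 := by nlinarith
  have hLβ : β ≤ L := by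
    refine le_trans ?_ hL2
    rw [hβ, div_le_div_iff₀ h2δ h2δ]
    nlinarith
  have hstep : Real.log (1 + γ * δ) - α * L ≤ -β := by
    have h1 : Real.log (1 + γ * δ) ≤ γ * δ := by
      have := Real.log_le_sub_one_of_pos (show (0 : ℝ) < 1 + γ * δ by nlinarith)
      linarith
    have h2 : α * (2 * δ / (2 + δ)) ≤ α * L :=
      mul_le_mul_of_nonneg_left hL2 (by linarith : (0 : ℝ) ≤ α)
    have h3 : α * (2 * δ / (2 + δ)) = γ * δ + β := by
      rw [hα, hβ]
      field_simp
      ring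
    linarith
  set ind : (Fin T → Bool) → ℕ → ℕ → ℝ :=
    fun x m j => if α * m + j ≤ (scount x m : ℝ) then 1 else 0 with hind
  have hind0 : ∀ x m j, 0 ≤ ind x m j := by
    intro x m j
    simp only [hind]
    split <;> norm_num
  -- pointwise bound
  have hpoint : ∀ x : Fin T → Bool, (scount x (N x) : ℝ) ≤ α * N x +
      ∑ m ∈ Finset.Icc 1 T, ∑ j ∈ Finset.range (T + 1), ind x m j := by
    intro x
    obtain ⟨hn1, hnT⟩ := hN x
    set n := N x with hn
    have hcT : scount x n ≤ T := le_trans (Finset.card_filter_le _ _) (by simp)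
    have hDn : ∑ j ∈ Finset.range (T + 1), ind x n j
        ≤ ∑ m ∈ Finset.Icc 1 T, ∑ j ∈ Finset.range (T + 1), ind x m j := by
      apply Finset.single_le_sum (f := fun m => ∑ j ∈ Finset.range (T + 1), ind x m j)
      · intro m _
        exact Finset.sum_nonneg fun j _ => hind0 x m j
      · exact Finset.mem_Icc.mpr ⟨hn1, hnT⟩
    have key : (scount x n : ℝ) - α * n ≤ ∑ j ∈ Finset.range (T + 1), ind x n j := by
      by_cases hc : (scount x n : ℝ) - α * n ≤ 0
      · exact le_trans hc (Finset.sum_nonneg fun j _ => hind0 x n j)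
      · push_neg at hc
        set c : ℝ := (scount x n : ℝ) - α * n with hcdef
        set K := ⌊c⌋₊ with hK
        have hKc : (K : ℝ) ≤ c := Nat.floor_le hc.le
        have hαn : 0 < α * n := by
          have ha : (0 : ℝ) < α := by linarith
          have hb : (1 : ℝ) ≤ (n : ℝ) := by exact_mod_cast hn1
          nlinarith
        have hKT : K ≤ T := by
          have h1 : (K : ℝ) ≤ (scount x n : ℝ) := by
            rw [hcdef] at hKc; linarith
          have h2 : (K : ℝ) ≤ (T : ℝ) :=
            le_trans h1 (by exact_mod_cast hcT)
          exact_mod_cast h2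
        have hsub : Finset.range (K + 1) ⊆ Finset.range (T + 1) :=
          Finset.range_subset_range.mpr (by omega)
        have h1 : ∑ j ∈ Finset.range (K + 1), ind x n j
            ≤ ∑ j ∈ Finset.range (T + 1), ind x n j :=
          Finset.sum_le_sum_of_subset_of_nonneg hsub fun j _ _ => hind0 x n j
        have h2 : ∑ j ∈ Finset.range (K + 1), ind x n j = K + 1 := by
          have hone : ∀ j ∈ Finset.range (K + 1), ind x n j = 1 := by
            intro j hj
            have hj' : (j : ℝ) ≤ (K : ℝ) := by
              exact_mod_cast Nat.lt_succ_iff.mp (Finset.mem_range.mp hj)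
            simp only [hind]
            rw [if_pos]
            rw [hcdef] at hKc
            linarith
          rw [Finset.sum_congr rfl hone, Finset.sum_const, Finset.card_range]
          simp
        have h3 : c < (K : ℝ) + 1 := by
          rw [hK]; exact Nat.lt_floor_add_one c
        rw [hcdef] at h3
        have : ((K : ℝ) + 1 : ℝ) ≤ ∑ j ∈ Finset.range (T + 1), ind x n j := by
          rw [← h2] at *
          push_cast at h1 ⊢
          rw [h2] at h1 ⊢
          push_cast
          linarith [h1]
        linarith
    linarith
  -- probability bound for each (m, j)
  have hP : ∀ m ∈ Finset.Icc 1 T, ∀ j ∈ Finset.range (T + 1),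
      ∑ x : Fin T → Bool, bernWeight γ x * ind x m j
        ≤ Real.exp (-β) ^ m * Real.exp (-β) ^ j := by
    intro m hm j _
    obtain ⟨_, hmT⟩ := Finset.mem_Icc.mp hm
    have h1 := chernoff_bound γ δ hγ0.le hγ1.le hδ0 T m hmT (α * m + j)
    rw [← hLdef] at h1
    refine le_trans h1 ?_
    rw [← Real.exp_nat_mul, ← Real.exp_nat_mul, ← Real.exp_add]
    apply Real.exp_le_exp.mpr
    have e2 : (m : ℝ) * (Real.log (1 + γ * δ) - α * L) ≤ (m : ℝ) * (-β) :=
      mul_le_mul_of_nonneg_left hstep (Nat.cast_nonneg m)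
    have e3 : (j : ℝ) * (-L) ≤ (j : ℝ) * (-β) :=
      mul_le_mul_of_nonneg_left (by linarith) (Nat.cast_nonneg j)
    nlinarith [e2, e3]
  -- swap order of summation
  have hswap : ∑ x : Fin T → Bool, bernWeight γ x *
        ∑ m ∈ Finset.Icc 1 T, ∑ j ∈ Finset.range (T + 1), ind x m j
      = ∑ m ∈ Finset.Icc 1 T, ∑ j ∈ Finset.range (T + 1),
          ∑ x : Fin T → Bool, bernWeight γ x * ind x m j := by
    simp_rw [Finset.mul_sum]
    rw [Finset.sum_comm]
    exact Finset.sum_congr rfl fun m _ => Finset.sum_comm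
  -- geometric series bound
  set r := Real.exp (-β) with hr
  have hr0 : (0 : ℝ) ≤ r := (Real.exp_pos _).le
  have hr1 : r < 1 := by
    rw [hr]
    exact Real.exp_lt_one_iff.mpr (by linarith)
  have hgeom : ∑ m ∈ Finset.Icc 1 T, ∑ j ∈ Finset.range (T + 1), r ^ m * r ^ j ≤ θ := by
    rw [← Finset.sum_mul_sum]
    have hB : ∑ j ∈ Finset.range (T + 1), r ^ j ≤ (1 - r)⁻¹ := geom_le_aux hr0 hr1 _
    have hA : ∑ m ∈ Finset.Icc 1 T, r ^ m ≤ r * (1 - r)⁻¹ := by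
      rw [← Finset.Ico_add_one_right_eq_Icc, Finset.sum_Ico_eq_sum_range]
      have : ∀ i ∈ Finset.range (T + 1 - 1), r ^ (1 + i) = r * r ^ i := by
        intro i _
        rw [pow_add, pow_one]
      rw [Finset.sum_congr rfl this, ← Finset.mul_sum]
      exact mul_le_mul_of_nonneg_left (geom_le_aux hr0 hr1 _) hr0
    have hBnn : 0 ≤ ∑ j ∈ Finset.range (T + 1), r ^ j :=
      Finset.sum_nonneg fun j _ => pow_nonneg hr0 j
    have hAB : (∑ m ∈ Finset.Icc 1 T, r ^ m) * ∑ j ∈ Finset.range (T + 1), r ^ j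
        ≤ (r * (1 - r)⁻¹) * (1 - r)⁻¹ := by
      apply mul_le_mul hA hB hBnn
      exact mul_nonneg hr0 (inv_nonneg.mpr (by linarith))
    refine le_trans hAB (le_of_eq ?_)
    have hE : (1 : ℝ) < Real.exp β := Real.one_lt_exp_iff.mpr hβ0
    have hrE : r = (Real.exp β)⁻¹ := by rw [hr, Real.exp_neg]
    have hE0 : Real.exp β ≠ 0 := by positivity
    have hE1 : Real.exp β - 1 ≠ 0 := by linarith
    have hne : (1 : ℝ) - (Real.exp β)⁻¹ ≠ 0 := by
      have h2 : (Real.exp β)⁻¹ < 1 := by rw [← hrE]; exact hr1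
      linarith
    rw [hθ, hrE]
    field_simp
  -- assemble
  calc ∑ x : Fin T → Bool, bernWeight γ x * (scount x (N x) : ℝ)
      ≤ ∑ x : Fin T → Bool, bernWeight γ x *
          (α * N x + ∑ m ∈ Finset.Icc 1 T, ∑ j ∈ Finset.range (T + 1), ind x m j) := by
        refine Finset.sum_le_sum fun x _ =>
          mul_le_mul_of_nonneg_left (hpoint x) (bernWeight_nonneg hγ0.le hγ1.le x)
    _ = α * (∑ x : Fin T → Bool, bernWeight γ x * N x)
        + ∑ x : Fin T → Bool, bernWeight γ x *
            ∑ m ∈ Finset.Icc 1 T, ∑ j ∈ Finset.range (T + 1), ind x m j := by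
        rw [Finset.mul_sum, ← Finset.sum_add_distrib]
        exact Finset.sum_congr rfl fun x _ => by ring
    _ ≤ α * (∑ x : Fin T → Bool, bernWeight γ x * N x) + θ := by
        have hD : ∑ x : Fin T → Bool, bernWeight γ x *
            ∑ m ∈ Finset.Icc 1 T, ∑ j ∈ Finset.range (T + 1), ind x m j ≤ θ := by
          rw [hswap]
          refine le_trans (Finset.sum_le_sum fun m hm =>
            Finset.sum_le_sum fun j hj => hP m hm j hj) hgeom
        linarith
    _ = θ + α * ∑ x : Fin T → Bool, bernWeight γ x * N x := by ring

end Caching
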